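/- Comparison principle: if (X,u) and (X̃,ũ) both solve the forward system X'(t) = -δX(t) + (1/β)(u(t)-α)⁺, u'(t) = (r+δ)u(t) - (P(X(t))-c)h on [0,T], with the same initial capacity X(0) = X̃(0) but u(0) < ũ(0), and P is Lipschitz and nonincreasing, then for all t ∈ [0,T] one has X(t) ≤ X̃(t) and u(t) < ũ(t). -/

import Mathlib

open Set Real

def IsForwardSol (δ β r h α c : ℝ) (P : ℝ → ℝ) (T : ℝ) (X u : ℝ → ℝ) : Prop :=
  ∀ t ∈ Set.Icc (0 : ℝ) T,
    HasDerivAt X (-δ * X t + (1 / β) * max (u t - α) 0) t ∧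
    HasDerivAt u ((r + δ) * u t - (P (X t) - c) * h) t

/-- Continuous induction principle for a coupled pair of functions. -/
lemma aux_comp {T : ℝ} {F G F' G' : ℝ → ℝ}
    (hFd : ∀ t ∈ Set.Icc (0:ℝ) T, HasDerivAt F (F' t) t)
    (hGd : ∀ t ∈ Set.Icc (0:ℝ) T, HasDerivAt G (G' t) t)
    (hF0 : 0 ≤ F 0) (hG0 : 0 < G 0)
    (hF' : ∀ t ∈ Set.Icc (0:ℝ) T, 0 ≤ G t → 0 ≤ F' t)
    (hG' : ∀ t ∈ Set.Icc (0:ℝ) T, 0 ≤ F t → 0 ≤ G' t) :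
    ∀ t ∈ Set.Icc (0:ℝ) T, 0 ≤ F t ∧ G 0 ≤ G t := by
  set S : Set ℝ := {t | 0 ≤ F t ∧ G 0 ≤ G t} with hSdef
  have hFc : ContinuousOn F (Set.Icc 0 T) := fun t ht =>
    (hFd t ht).continuousAt.continuousWithinAt
  have hGc : ContinuousOn G (Set.Icc 0 T) := fun t ht =>
    (hGd t ht).continuousAt.continuousWithinAt
  have hsub : Set.Icc (0:ℝ) T ⊆ S := by
    apply IsClosed.Icc_subset_of_forall_mem_nhdsWithin
    · have h1 : IsClosed (Set.Icc (0:ℝ) T ∩ F ⁻¹' Set.Ici 0) :=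
        hFc.preimage_isClosed_of_isClosed isClosed_Icc isClosed_Ici
      have h2 : IsClosed (Set.Icc (0:ℝ) T ∩ G ⁻¹' Set.Ici (G 0)) :=
        hGc.preimage_isClosed_of_isClosed isClosed_Icc isClosed_Ici
      have : S ∩ Set.Icc 0 T =
          (Set.Icc (0:ℝ) T ∩ F ⁻¹' Set.Ici 0) ∩ (Set.Icc (0:ℝ) T ∩ G ⁻¹' Set.Ici (G 0)) := by
        ext t
        simp only [hSdef, Set.mem_inter_iff, Set.mem_setOf_eq, Set.mem_preimage,
          Set.mem_Ici]
        tauto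
      rw [this]
      exact h1.inter h2
    · exact ⟨hF0, le_refl _⟩
    · rintro x ⟨⟨hFx, hGx⟩, hx0, hxT⟩
      have hGxpos : 0 < G x := lt_of_lt_of_le hG0 hGx
      have hxmem : x ∈ Set.Icc (0:ℝ) T := ⟨hx0, le_of_lt hxT⟩
      have hcont : ContinuousWithinAt G (Set.Icc 0 T) x := hGc x hxmem
      have hev : ∀ᶠ t in nhdsWithin x (Set.Icc 0 T), 0 < G t :=
        Filter.Tendsto.eventually hcont (eventually_gt_nhds hGxpos)
      obtain ⟨ε, hε, hball⟩ := Metric.mem_nhdsWithin_iff.mp hev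
      set y : ℝ := min (x + ε/2) T with hydef
      have hxy : x < y := lt_min (by linarith) hxT
      have hyT : y ≤ T := min_le_right _ _
      have hsub1 : Set.Icc x y ⊆ Set.Icc (0:ℝ) T := fun t ht =>
        ⟨le_trans hx0 ht.1, le_trans ht.2 hyT⟩
      have hGpos : ∀ t ∈ Set.Icc x y, 0 < G t := by
        intro t ht
        have h1 : t ≤ x + ε/2 := le_trans ht.2 (min_le_left _ _)
        have h2 : t ∈ Metric.ball x ε := by
          rw [Metric.mem_ball, Real.dist_eq, abs_of_nonneg (by linarith [ht.1])]
          linarith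
        exact hball ⟨h2, hsub1 ht⟩
      -- F is monotone on [x, y]
      have hFmono : MonotoneOn F (Set.Icc x y) := by
        apply monotoneOn_of_deriv_nonneg (convex_Icc x y) (hFc.mono hsub1)
        · intro t ht
          rw [interior_Icc] at ht
          exact ((hFd t (hsub1 (Set.Ioo_subset_Icc_self ht))).differentiableAt).differentiableWithinAt
        · intro t ht
          rw [interior_Icc] at ht
          have htm := hsub1 (Set.Ioo_subset_Icc_self ht)
          rw [(hFd t htm).deriv]
          exact hF' t htm (le_of_lt (hGpos t (Set.Ioo_subset_Icc_self ht)))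
      have hxm : x ∈ Set.Icc x y := ⟨le_refl x, le_of_lt hxy⟩
      have hFpos : ∀ t ∈ Set.Icc x y, 0 ≤ F t := fun t ht =>
        le_trans hFx (hFmono hxm ht ht.1)
      -- G is monotone on [x, y]
      have hGmono : MonotoneOn G (Set.Icc x y) := by
        apply monotoneOn_of_deriv_nonneg (convex_Icc x y) (hGc.mono hsub1)
        · intro t ht
          rw [interior_Icc] at ht
          exact ((hGd t (hsub1 (Set.Ioo_subset_Icc_self ht))).differentiableAt).differentiableWithinAt
        · intro t ht
          rw [interior_Icc] at ht
          have htm := hsub1 (Set.Ioo_subset_Icc_self ht)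
          rw [(hGd t htm).deriv]
          exact hG' t htm (hFpos t (Set.Ioo_subset_Icc_self ht))
      have hIocS : Set.Ioc x y ⊆ S := by
        intro t ht
        have htm : t ∈ Set.Icc x y := ⟨le_of_lt ht.1, ht.2⟩
        exact ⟨hFpos t htm, le_trans hGx (hGmono hxm htm (le_of_lt ht.1))⟩
      exact Filter.mem_of_superset (Ioc_mem_nhdsGT hxy) hIocS
  intro t ht
  exact hsub ht

/-- Comparison principle for the forward system. -/
theorem stmt_1 (δ β r h T α c : ℝ) (hδ : 0 < δ) (hβ : 0 < β) (hr : 0 < r)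
    (hh : 0 < h) (hT : 0 < T) (hα : 0 < α)
    (P : ℝ → ℝ) (hP : ∃ L : NNReal, LipschitzWith L P) (hPmono : Antitone P)
    (X u X' u' : ℝ → ℝ)
    (hsol : IsForwardSol δ β r h α c P T X u)
    (hsol' : IsForwardSol δ β r h α c P T X' u')
    (hX0 : X 0 = X' 0) (hu0 : u 0 < u' 0) :
    ∀ t ∈ Set.Icc (0 : ℝ) T, X t ≤ X' t ∧ u t < u' t := by
  have key := aux_comp (T := T)
    (F := fun t => Real.exp (δ * t) * (X' t - X t))
    (G := fun t => Real.exp (-(r + δ) * t) * (u' t - u t))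
    (F' := fun t => Real.exp (δ * t) * ((1/β) * (max (u' t - α) 0 - max (u t - α) 0)))
    (G' := fun t => Real.exp (-(r + δ) * t) * ((P (X t) - P (X' t)) * h))
    (hFd := by
      intro t ht
      have h1 := (hsol t ht).1
      have h2 := (hsol' t ht).1
      have he : HasDerivAt (fun s => Real.exp (δ * s)) (Real.exp (δ * t) * δ) t := by
        simpa [mul_comm] using ((hasDerivAt_id t).const_mul δ).exp
      have := he.mul (h2.sub h1)
      exact this.congr_deriv (by simp only [Pi.sub_apply]; ring))
    (hGd := by
      intro t ht
      have h1 := (hsol t ht).2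
      have h2 := (hsol' t ht).2
      have he : HasDerivAt (fun s => Real.exp (-(r + δ) * s))
          (Real.exp (-(r + δ) * t) * (-(r + δ))) t := by
        simpa [mul_comm] using ((hasDerivAt_id t).const_mul (-(r + δ))).exp
      have := he.mul (h2.sub h1)
      exact this.congr_deriv (by simp only [Pi.sub_apply]; ring))
    (hF0 := by simp [hX0])
    (hG0 := mul_pos (Real.exp_pos _) (by linarith))
    (hF' := by
      intro t ht hGt
      have hexp : (0:ℝ) < Real.exp (-(r + δ) * t) := Real.exp_pos _
      have hGt' : (0:ℝ) ≤ Real.exp (-(r + δ) * t) * (u' t - u t) := hGt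
      have huu : u t ≤ u' t := by nlinarith [hGt', hexp]
      have hmax : max (u t - α) 0 ≤ max (u' t - α) 0 :=
        max_le_max (by linarith) (le_refl 0)
      have : (0:ℝ) ≤ (1/β) * (max (u' t - α) 0 - max (u t - α) 0) := by
        apply mul_nonneg (by positivity); linarith
      exact mul_nonneg (le_of_lt (Real.exp_pos _)) this)
    (hG' := by
      intro t ht hFt
      have hexp : (0:ℝ) < Real.exp (δ * t) := Real.exp_pos _
      have hFt' : (0:ℝ) ≤ Real.exp (δ * t) * (X' t - X t) := hFt
      have hXX : X t ≤ X' t := by nlinarith [hFt', hexp]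
      have hPP : P (X' t) ≤ P (X t) := hPmono hXX
      have : (0:ℝ) ≤ (P (X t) - P (X' t)) * h := mul_nonneg (by linarith) (le_of_lt hh)
      exact mul_nonneg (le_of_lt (Real.exp_pos _)) this)
  intro t ht
  obtain ⟨hF, hG⟩ := key t ht
  have hF' : (0:ℝ) ≤ Real.exp (δ * t) * (X' t - X t) := hF
  have hG' : Real.exp (-(r + δ) * 0) * (u' 0 - u 0) ≤ Real.exp (-(r + δ) * t) * (u' t - u t) := hG
  have hexp1 : (0:ℝ) < Real.exp (δ * t) := Real.exp_pos _
  have hexp2 : (0:ℝ) < Real.exp (-(r + δ) * t) := Real.exp_pos _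
  have hG0 : (0:ℝ) < Real.exp (-(r + δ) * 0) * (u' 0 - u 0) := by
    have : u' 0 - u 0 > 0 := by linarith
    exact mul_pos (Real.exp_pos _) this
  constructor
  · nlinarith [hF', hexp1]
  · have hGt : (0:ℝ) < Real.exp (-(r + δ) * t) * (u' t - u t) := lt_of_lt_of_le hG0 hG'
    nlinarith [hGt, hexp2]
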